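/- arXiv:1307.8402 — 4 statements merged into one kernel-verified Lean document; each statement's English description precedes it below -/
import Mathlib

section
/- Let s₀, y' ∈ ℝ and 0 < α' ≤ α. Then {z ∈ ℍ : dist z (y' + αi) < log(e^{s₀}/α)} ⊆ {z ∈ ℍ : dist z (y' + α'i) < log(e^{s₀}/α')}. -/
/-- The point `y' + α i` of the upper half-plane, for `α > 0`. -/
noncomputable def hpt (y' α : ℝ) (hα : 0 < α) : UpperHalfPlane :=
  ⟨(y' : ℂ) + (α : ℂ) * Complex.I, by simpa using hα⟩

lemma hpt_im (y' α : ℝ) (hα : 0 < α) : (hpt y' α hα).im = α := by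
  simp [hpt, UpperHalfPlane.im]

lemma hpt_re (y' α : ℝ) (hα : 0 < α) : (hpt y' α hα).re = y' := by
  simp [hpt, UpperHalfPlane.re]

lemma cosh_log_div (s₀ α : ℝ) (hα : 0 < α) :
    Real.cosh (Real.log (Real.exp s₀ / α)) = (Real.exp s₀ / α + α / Real.exp s₀) / 2 := by
  rw [Real.cosh_eq, Real.exp_log (by positivity), ← Real.log_inv, Real.exp_log (by positivity)]
  rw [inv_div]

/-- Decreasing the height `α` of the center while keeping `s₀` fixed enlarges the
hyperbolic ball: the nesting of the balls in the description of `𝒟_{s₀}(Γ)`. -/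
theorem stmt_2 (s₀ y' α α' : ℝ) (hα' : 0 < α') (h : α' ≤ α) :
    {z : UpperHalfPlane | dist z (hpt y' α (hα'.trans_le h)) < Real.log (Real.exp s₀ / α)} ⊆
    {z : UpperHalfPlane | dist z (hpt y' α' hα') < Real.log (Real.exp s₀ / α')} := by
  intro z hz
  simp only [Set.mem_setOf_eq] at hz ⊢
  have hα : 0 < α := hα'.trans_le h
  have hd0 : (0:ℝ) ≤ dist z (hpt y' α hα) := dist_nonneg
  have hR : 0 < Real.log (Real.exp s₀ / α) := hd0.trans_lt hz
  have hαe : α < Real.exp s₀ := by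
    have h1 : 1 < Real.exp s₀ / α := (Real.log_pos_iff (by positivity)).mp hR
    exact (one_lt_div hα).mp h1
  -- convert hypothesis to cosh inequality
  have hc : Real.cosh (dist z (hpt y' α hα)) < Real.cosh (Real.log (Real.exp s₀ / α)) := by
    rw [Real.cosh_lt_cosh, abs_of_nonneg hd0, abs_of_pos hR]
    exact hz
  rw [UpperHalfPlane.cosh_dist', cosh_log_div _ _ hα, hpt_im, hpt_re] at hc
  -- goal via cosh
  have hR'0 : 0 < Real.log (Real.exp s₀ / α') := by
    apply Real.log_pos
    rw [lt_div_iff₀ hα']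
    nlinarith
  -- polynomial form of hc
  set E := Real.exp s₀ with hE
  have he : 0 < E := Real.exp_pos s₀
  have hzim : 0 < z.im := z.im_pos
  have hrhs : (E / α + α / E) / 2 = (E ^ 2 + α ^ 2) / (2 * α * E) := by
    field_simp
  rw [hrhs, div_lt_div_iff₀ (by positivity) (by positivity)] at hc
  have hc3 : ((z.re - y') ^ 2 + z.im ^ 2 + α ^ 2) * E < z.im * (E ^ 2 + α ^ 2) := by
    nlinarith [hc, mul_pos hα he]
  have hylt : z.im < E := by
    by_contra hy
    push_neg at hy
    have h1 : 0 ≤ E * z.im - α ^ 2 := by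
      nlinarith [mul_le_mul hy le_rfl he.le hzim.le, mul_lt_mul_of_pos_left hαe he,
        mul_lt_mul_of_pos_right hαe hα]
    nlinarith [hc3, sq_nonneg (z.re - y'), mul_nonneg (sub_nonneg.mpr hy) h1]
  have goal : Real.cosh (dist z (hpt y' α' hα')) < Real.cosh (Real.log (Real.exp s₀ / α')) := by
    rw [UpperHalfPlane.cosh_dist', cosh_log_div _ _ hα', hpt_im, hpt_re, ← hE]
    have hrhs' : (E / α' + α' / E) / 2 = (E ^ 2 + α' ^ 2) / (2 * α' * E) := by
      field_simp
    rw [hrhs', div_lt_div_iff₀ (by positivity) (by positivity)]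
    have hP : 0 ≤ (E - z.im) * (α ^ 2 - α' ^ 2) :=
      mul_nonneg (by linarith) (by nlinarith)
    nlinarith [hc3, hP, mul_pos hα' he]
  rw [Real.cosh_lt_cosh, abs_of_nonneg dist_nonneg, abs_of_pos hR'0] at goal
  exact goal
end

section
/- Let s₀, y' ∈ ℝ. Then the union over α ∈ (0, e^{s₀}) of the sets {z ∈ ℍ : dist z (y' + αi) < log(e^{s₀}/α)} equals the open horodisc {z ∈ ℍ : (z.re − y')² + (z.im − (1/2)·e^{s₀})² < (1/4)·e^{2s₀}}. -/
/-- Membership in the hyperbolic ball, rewritten division-free via cosh. -/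
lemma ball_iff (s₀ y' α : ℝ) (hα : 0 < α) (hαR : α < Real.exp s₀) (z : UpperHalfPlane) :
    dist z (hpt y' α hα) < Real.log (Real.exp s₀ / α) ↔
      Real.exp s₀ * ((z.re - y') ^ 2 + z.im ^ 2 + α ^ 2) <
        z.im * (Real.exp s₀ ^ 2 + α ^ 2) := by
  have hR : 0 < Real.exp s₀ := Real.exp_pos s₀
  have hy : 0 < z.im := z.im_pos
  have hlog : 0 < Real.log (Real.exp s₀ / α) :=
    Real.log_pos (by rw [lt_div_iff₀ hα]; linarith)
  have hcosh : Real.cosh (Real.log (Real.exp s₀ / α)) =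
      (Real.exp s₀ ^ 2 + α ^ 2) / (2 * α * Real.exp s₀) := by
    rw [Real.cosh_eq, Real.exp_log (by positivity), Real.exp_neg,
      Real.exp_log (by positivity)]
    field_simp
  have key : dist z (hpt y' α hα) < Real.log (Real.exp s₀ / α) ↔
      Real.cosh (dist z (hpt y' α hα)) < Real.cosh (Real.log (Real.exp s₀ / α)) := by
    rw [Real.cosh_lt_cosh, abs_of_nonneg dist_nonneg, abs_of_pos hlog]
  rw [key, UpperHalfPlane.cosh_dist', hpt_re, hpt_im, hcosh,
    div_lt_div_iff₀ (by positivity) (by positivity),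
    show ((z.re - y') ^ 2 + z.im ^ 2 + α ^ 2) * (2 * α * Real.exp s₀) =
      (Real.exp s₀ * ((z.re - y') ^ 2 + z.im ^ 2 + α ^ 2)) * (2 * α) by ring,
    show (Real.exp s₀ ^ 2 + α ^ 2) * (2 * z.im * α) =
      (z.im * (Real.exp s₀ ^ 2 + α ^ 2)) * (2 * α) by ring,
    mul_lt_mul_iff_of_pos_right (by positivity)]

/-- Pure real-variable equivalence underlying the horodisc description. -/
lemma main_real (R x v : ℝ) (hR : 0 < R) (hv : 0 < v) :
    (∃ α : ℝ, 0 < α ∧ α < R ∧ R * (x ^ 2 + v ^ 2 + α ^ 2) < v * (R ^ 2 + α ^ 2)) ↔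
      x ^ 2 + (v - (1 / 2) * R) ^ 2 < (1 / 4) * R ^ 2 := by
  constructor
  · rintro ⟨α, hα, hαR, h⟩
    have hlt : x ^ 2 + v ^ 2 - v * R < 0 := by
      rcases le_or_gt v R with hvR | hvR
      · nlinarith [mul_nonneg (sq_nonneg α) (sub_nonneg.2 hvR), mul_pos hR hv]
      · nlinarith [mul_lt_mul_of_pos_right (show α ^ 2 < R ^ 2 by nlinarith)
          (sub_pos.2 hvR), sq_nonneg x, sq_nonneg (v - R)]
    nlinarith
  · intro hz
    have hlt : x ^ 2 + v ^ 2 - v * R < 0 := by nlinarith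
    have hvR : v < R := by nlinarith [sq_nonneg x]
    set c : ℝ := R * (v * R - x ^ 2 - v ^ 2) / (R - v) with hcdef
    have hc : 0 < c := div_pos (by nlinarith) (by linarith)
    have hcR : c < R ^ 2 := by
      rw [hcdef, div_lt_iff₀ (by linarith)]
      nlinarith [mul_pos hR (mul_pos (sub_pos.2 hvR) (sub_pos.2 hvR)), mul_nonneg hR.le (sq_nonneg x)]
    refine ⟨Real.sqrt c / 2, by positivity, ?_, ?_⟩
    · have h1 : Real.sqrt c < R := by
        have := Real.sqrt_lt_sqrt hc.le hcR
        rwa [Real.sqrt_sq hR.le] at this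
      have h2 : 0 < Real.sqrt c := Real.sqrt_pos.2 hc
      linarith
    · have hα2 : (Real.sqrt c / 2) ^ 2 = c / 4 := by
        rw [div_pow, Real.sq_sqrt hc.le]; norm_num
      have hkey : (Real.sqrt c / 2) ^ 2 * (R - v) < R * (v * R - x ^ 2 - v ^ 2) := by
        have hlt2 : (Real.sqrt c / 2) ^ 2 < c := by
          rw [hα2]; linarith
        calc (Real.sqrt c / 2) ^ 2 * (R - v) < c * (R - v) :=
              mul_lt_mul_of_pos_right hlt2 (by linarith)
          _ = R * (v * R - x ^ 2 - v ^ 2) := by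
              rw [hcdef, div_mul_cancel₀ _ (show R - v ≠ 0 by intro h; linarith)]
      nlinarith [hkey]

/-- The union over `α ∈ (0, exp s₀)` of the hyperbolic balls of radius `log (exp s₀ / α)`
centered at height `α` over the boundary point `y'` is the open horodisc of Euclidean
radius `(1/2) exp s₀` tangent to the real axis at `y'`. -/
theorem stmt_3 (s₀ y' : ℝ) :
    (⋃ (α : ℝ) (hα : 0 < α) (_ : α < Real.exp s₀),
        {z : UpperHalfPlane | dist z (hpt y' α hα) < Real.log (Real.exp s₀ / α)}) =
    {z : UpperHalfPlane |
      (z.re - y') ^ 2 + (z.im - (1 / 2) * Real.exp s₀) ^ 2 < (1 / 4) * Real.exp (2 * s₀)} := by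
  ext z
  simp only [Set.mem_iUnion, Set.mem_setOf_eq]
  have hR2 : Real.exp (2 * s₀) = Real.exp s₀ ^ 2 := by rw [two_mul, Real.exp_add, sq]
  rw [hR2, ← main_real (Real.exp s₀) (z.re - y') z.im (Real.exp_pos s₀) z.im_pos]
  constructor
  · rintro ⟨α, hα, hαR, h⟩
    exact ⟨α, hα, hαR, (ball_iff s₀ y' α hα hαR z).1 h⟩
  · rintro ⟨α, hα, hαR, h⟩
    exact ⟨α, hα, hαR, (ball_iff s₀ y' α hα hαR z).2 h⟩
end

section
/- Let s₀ ∈ ℝ and Γ ⊆ ℝ. Then {z ∈ ℍ : ∃ y' ∈ Γ, ∃ α with 0 < α < e^{s₀} and dist z (y' + αi) < log(e^{s₀}/α)} = {z ∈ ℍ : ∃ y' ∈ Γ, (z.re − y')² + (z.im − (1/2)·e^{s₀})² < (1/4)·e^{2s₀}}. -/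
lemma cosh_dist_hpt (z : UpperHalfPlane) (y' α : ℝ) (hα : 0 < α) :
    Real.cosh (dist z (hpt y' α hα)) =
      ((z.re - y') ^ 2 + z.im ^ 2 + α ^ 2) / (2 * z.im * α) := by
  rw [UpperHalfPlane.cosh_dist, hpt_im]
  have h1 : dist (z : ℂ) ((hpt y' α hα : ℂ)) ^ 2 = (z.re - y') ^ 2 + (z.im - α) ^ 2 := by
    rw [Complex.dist_eq_re_im, Real.sq_sqrt (by positivity)]
    congr 2
    · simp [hpt, UpperHalfPlane.coe_re]
    · simp [hpt, UpperHalfPlane.coe_im]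
  rw [h1]
  have hz := z.im_pos
  field_simp
  ring

lemma dist_hpt_lt_iff (z : UpperHalfPlane) (y' α r : ℝ) (hα : 0 < α) (hr : 0 < r) :
    dist z (hpt y' α hα) < r ↔
      ((z.re - y') ^ 2 + z.im ^ 2 + α ^ 2) / (2 * z.im * α) < Real.cosh r := by
  rw [← cosh_dist_hpt z y' α hα, Real.cosh_lt_cosh, abs_of_nonneg dist_nonneg, abs_of_pos hr]

lemma key_iff (z : UpperHalfPlane) (y' α R : ℝ) (hα : 0 < α) (hαR : α < R) :
    dist z (hpt y' α hα) < Real.log (R / α) ↔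
      ((z.re - y') ^ 2 + z.im ^ 2 + α ^ 2) * R < (R ^ 2 + α ^ 2) * z.im := by
  have hRpos : 0 < R := hα.trans hαR
  have hy := z.im_pos
  have hlogpos : 0 < Real.log (R / α) :=
    Real.log_pos (by rw [lt_div_iff₀ hα]; simpa using hαR)
  have hcosh : Real.cosh (Real.log (R / α)) = (R ^ 2 + α ^ 2) / (2 * R * α) := by
    rw [Real.cosh_eq, Real.exp_log (by positivity), Real.exp_neg,
      Real.exp_log (by positivity)]
    field_simp
  rw [dist_hpt_lt_iff z y' α _ hα hlogpos, hcosh,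
    div_lt_div_iff₀ (by positivity) (by positivity)]
  constructor <;> intro hh <;> nlinarith [hh, hα, hy, hRpos]

/-- The set `𝒟_{s₀}(Γ)` (union of the hyperbolic balls `B((α,y'), log(exp s₀/α))` over
`y' ∈ Γ` and `0 < α < exp s₀`) equals the union of the open horodiscs of Euclidean radius
`(1/2) exp s₀` tangent to the real axis at the points of `Γ`. -/
theorem stmt_4 (s₀ : ℝ) (Γ : Set ℝ) :
    {z : UpperHalfPlane | ∃ y' ∈ Γ, ∃ α : ℝ, ∃ hα : 0 < α,
        α < Real.exp s₀ ∧ dist z (hpt y' α hα) < Real.log (Real.exp s₀ / α)} =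
    {z : UpperHalfPlane | ∃ y' ∈ Γ,
        (z.re - y') ^ 2 + (z.im - (1 / 2) * Real.exp s₀) ^ 2 < (1 / 4) * Real.exp (2 * s₀)} := by
  ext z
  have hRpos : 0 < Real.exp s₀ := Real.exp_pos s₀
  obtain ⟨R, hR⟩ : ∃ R, R = Real.exp s₀ := ⟨_, rfl⟩
  rw [← hR] at hRpos ⊢
  have hy := z.im_pos
  have hR2 : Real.exp (2 * s₀) = R ^ 2 := by rw [two_mul, Real.exp_add, hR]; ring
  constructor
  · rintro ⟨y', hy', α, hα, hαR, hd⟩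
    refine ⟨y', hy', ?_⟩
    rw [key_iff z y' α R hα hαR] at hd
    rw [hR2]
    have hyR : z.im < R := by
      by_contra hc
      push_neg at hc
      have h6 : α ^ 2 < R * z.im := by nlinarith
      nlinarith [hd, sq_nonneg (z.re - y'),
        mul_nonneg (sub_nonneg.mpr hc) (by linarith : (0:ℝ) ≤ R * z.im - α ^ 2)]
    have h4 : α ^ 2 * (z.im - R) < 0 := by nlinarith [mul_pos hα hα]
    have h5 : R * ((z.re - y') ^ 2 + z.im ^ 2 - z.im * R) < 0 := by nlinarith [hd, h4]
    nlinarith [h5, hRpos]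
  · rintro ⟨y', hy', h⟩
    rw [hR2] at h
    have hL : (z.re - y') ^ 2 + z.im ^ 2 - z.im * R < 0 := by nlinarith
    have hyR : z.im < R := by nlinarith [sq_nonneg (z.re - y')]
    have hRy : (0 : ℝ) < R - z.im := by linarith
    obtain ⟨L, hLdef⟩ : ∃ L, L = (z.re - y') ^ 2 + z.im ^ 2 - z.im * R := ⟨_, rfl⟩
    have hLneg : L < 0 := hLdef ▸ hL
    have hsq : 0 < -L * R / (R - z.im) := div_pos (by nlinarith) hRy
    obtain ⟨α, hαdef⟩ : ∃ a, a = min (R / 2) (Real.sqrt (-L * R / (R - z.im)) / 2) := ⟨_, rfl⟩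
    have hαpos : 0 < α := hαdef ▸ lt_min (by linarith) (by positivity)
    have hαR : α < R := lt_of_le_of_lt (hαdef ▸ min_le_left _ _) (by linarith)
    refine ⟨y', hy', α, hαpos, hαR, ?_⟩
    rw [key_iff z y' α R hαpos hαR]
    have h1 : α ≤ Real.sqrt (-L * R / (R - z.im)) / 2 := hαdef ▸ min_le_right _ _
    have h2 : α ^ 2 ≤ (-L * R / (R - z.im)) / 4 := by
      have hs := Real.sq_sqrt hsq.le
      nlinarith [Real.sqrt_nonneg (-L * R / (R - z.im)), hαpos]
    have hcan : (-L * R / (R - z.im)) * (R - z.im) = -L * R := div_mul_cancel₀ _ (ne_of_gt hRy)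
    have h3 : α ^ 2 * (R - z.im) < -L * R := by nlinarith [h2, hRy, hsq]
    nlinarith [h3, hLdef ▸ h3]
end

section
/- Let (X, μ) be a measure space, N ∈ ℕ, and φ₁, …, φ_N an orthonormal family in the real Hilbert space L²(X, μ). Let H_ac = {f ∈ L²(X, μ) : ⟨f, φ_j⟩ = 0 for all j}, let K be a real Hilbert space, V : H_ac → K a linear isometry, A ⊆ X measurable, and M = {V f : f ∈ H_ac, f = 0 almost everywhere on X ∖ A}. Assume the N × N Gram matrix G with entries G_{jk} = ⟨1_A·φ_j, 1_A·φ_k⟩ is invertible. Then M is a closed subspace of K, and for every f ∈ H_ac there exist unique real numbers α₁, …, α_N with ⟨f, 1_A·φ_k⟩ = Σ_j G_{kj} α_j for every k; for this choice the function 1_A·(f − Σ_j α_j φ_j) belongs to H_ac and the orthogonal projection of V f onto M equals V(1_A·(f − Σ_j α_j φ_j)). -/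
open MeasureTheory

set_option synthInstance.maxHeartbeats 1000000

/-- The element of `L²(X, μ)` obtained by multiplying `f` pointwise by the indicator
function of the set `A`. -/
noncomputable def indLp {X : Type*} [MeasurableSpace X] {μ : Measure X}
    (A : Set X) (hA : MeasurableSet A) (f : Lp ℝ 2 μ) : Lp ℝ 2 μ :=
  ((Lp.memLp f).indicator hA).toLp (A.indicator f)

section aux
variable {X : Type*} [MeasurableSpace X] {μ : Measure X} {A : Set X} (hA : MeasurableSet A)

lemma indLp_coeFn (f : Lp ℝ 2 μ) : ⇑(indLp A hA f) =ᵐ[μ] A.indicator ⇑f :=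
  MemLp.coeFn_toLp _

lemma indLp_add (f g : Lp ℝ 2 μ) :
    indLp A hA (f + g) = indLp A hA f + indLp A hA g := by
  apply Lp.ext
  filter_upwards [indLp_coeFn hA (f + g), indLp_coeFn hA f, indLp_coeFn hA g,
    Lp.coeFn_add f g, Lp.coeFn_add (indLp A hA f) (indLp A hA g)] with x h1 h2 h3 h4 h5
  rw [h1, h5, Pi.add_apply, h2, h3]
  by_cases hx : x ∈ A
  · rw [Set.indicator_of_mem hx, Set.indicator_of_mem hx, Set.indicator_of_mem hx]; exact h4
  · simp [Set.indicator_of_notMem hx]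

lemma indLp_smul (c : ℝ) (f : Lp ℝ 2 μ) :
    indLp A hA (c • f) = c • indLp A hA f := by
  apply Lp.ext
  filter_upwards [indLp_coeFn hA (c • f), indLp_coeFn hA f,
    Lp.coeFn_smul c f, Lp.coeFn_smul c (indLp A hA f)] with x h1 h2 h3 h4
  rw [h1, h4, Pi.smul_apply, h2]
  by_cases hx : x ∈ A
  · rw [Set.indicator_of_mem hx, Set.indicator_of_mem hx]; exact h3
  · simp [Set.indicator_of_notMem hx]

noncomputable def indLpL (hA : MeasurableSet A) : Lp ℝ 2 μ →ₗ[ℝ] Lp ℝ 2 μ where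
  toFun := indLp A hA
  map_add' := indLp_add hA
  map_smul' := indLp_smul hA

@[simp] lemma indLpL_apply (f : Lp ℝ 2 μ) : indLpL hA f = indLp A hA f := rfl

lemma indLp_norm_le (f : Lp ℝ 2 μ) : ‖indLp A hA f‖ ≤ ‖f‖ := by
  rw [indLp, Lp.norm_toLp, Lp.norm_def]
  exact ENNReal.toReal_mono (Lp.eLpNorm_ne_top f) (eLpNorm_indicator_le _)

lemma inner_indLp_left (f g : Lp ℝ 2 μ) :
    (inner ℝ (indLp A hA f) g : ℝ) = inner ℝ f (indLp A hA g) := by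
  rw [L2.inner_def, L2.inner_def]
  refine integral_congr_ae ?_
  filter_upwards [indLp_coeFn hA f, indLp_coeFn hA g] with x h1 h2
  rw [h1, h2]
  by_cases hx : x ∈ A <;>
    simp [Set.indicator_of_mem, Set.indicator_of_notMem, hx, RCLike.inner_apply,
      starRingEnd_apply]

lemma inner_indLp_indLp (f g : Lp ℝ 2 μ) :
    (inner ℝ (indLp A hA f) (indLp A hA g) : ℝ) = inner ℝ f (indLp A hA g) := by
  rw [L2.inner_def, L2.inner_def]
  refine integral_congr_ae ?_
  filter_upwards [indLp_coeFn hA f, indLp_coeFn hA g] with x h1 h2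
  rw [h1, h2]
  by_cases hx : x ∈ A <;>
    simp [Set.indicator_of_mem, Set.indicator_of_notMem, hx, RCLike.inner_apply,
      starRingEnd_apply]

lemma indLp_indLp (f : Lp ℝ 2 μ) : indLp A hA (indLp A hA f) = indLp A hA f := by
  apply Lp.ext
  filter_upwards [indLp_coeFn hA (indLp A hA f), indLp_coeFn hA f] with x h1 h2
  rw [h1]
  by_cases hx : x ∈ A
  · rw [Set.indicator_of_mem hx]
  · rw [Set.indicator_of_notMem hx, h2, Set.indicator_of_notMem hx]

lemma indLp_of_ae_zero {f : Lp ℝ 2 μ} (h : (⇑f : X → ℝ) =ᵐ[μ.restrict Aᶜ] 0) :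
    indLp A hA f = f :=
  Lp.ext ((indLp_coeFn hA f).trans (indicator_ae_eq_of_restrict_compl_ae_eq_zero hA h))

lemma indLp_ae_zero_compl (f : Lp ℝ 2 μ) :
    (⇑(indLp A hA f) : X → ℝ) =ᵐ[μ.restrict Aᶜ] 0 :=
  ((indLp_coeFn hA f).filter_mono (ae_mono Measure.restrict_le_self)).trans
    (indicator_ae_eq_restrict_compl hA)

lemma indLp_eq_zero_iff (f : Lp ℝ 2 μ) :
    indLp A hA f = 0 ↔ (⇑f : X → ℝ) =ᵐ[μ.restrict A] 0 := by
  rw [ae_eq_restrict_iff_indicator_ae_eq hA]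
  constructor
  · intro h
    have h0 : ⇑(indLp A hA f) =ᵐ[μ] 0 := h ▸ Lp.coeFn_zero ℝ 2 μ
    have := (indLp_coeFn hA f).symm.trans h0
    filter_upwards [this] with x hx
    simpa using hx
  · intro h
    have h' : A.indicator ⇑f =ᵐ[μ] 0 := by
      filter_upwards [h] with x hx
      simpa using hx
    exact Lp.ext ((indLp_coeFn hA f).trans (h'.trans (Lp.coeFn_zero ℝ 2 μ).symm))

end aux


/-- Hilbert-space content of Lemma 4.3 (the case with eigenvalues): `φ₁, …, φ_N` is an
orthonormal family in `L²(X,μ)`, `H_ac` its orthogonal complement, `V : H_ac → K` a linear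
isometry, `A ⊆ X` measurable, `M = {V f : f ∈ H_ac, f = 0` a.e. on `X ∖ A}`, and the Gram
matrix `G_{jk} = ⟨1_A φ_j, 1_A φ_k⟩` invertible. Then `M` is a closed subspace of `K`; for
every `f ∈ H_ac` the linear system `⟨f, 1_A φ_k⟩ = Σ_j G_{kj} α_j` has a unique solution
`α`, and for this `α` the function `1_A (f − Σ_j α_j φ_j)` lies in `H_ac` and the
orthogonal projection of `V f` onto `M` equals `V (1_A (f − Σ_j α_j φ_j))`. -/
theorem stmt_16 {X : Type*} [MeasurableSpace X] (μ : Measure X) (N : ℕ)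
    (φ : Fin N → Lp ℝ 2 μ) (hφ : Orthonormal ℝ φ)
    (Hac : Submodule ℝ (Lp ℝ 2 μ))
    (hHac : ∀ f : Lp ℝ 2 μ, f ∈ Hac ↔ ∀ j, (inner ℝ f (φ j) : ℝ) = 0)
    {K : Type*} [NormedAddCommGroup K] [InnerProductSpace ℝ K] [CompleteSpace K]
    (V : Hac →ₗᵢ[ℝ] K) (A : Set X) (hA : MeasurableSet A)
    (M : Set K)
    (hM : M = {k : K | ∃ f : Hac,
      (⇑(f : Lp ℝ 2 μ) : X → ℝ) =ᵐ[μ.restrict Aᶜ] 0 ∧ V f = k})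
    (G : Matrix (Fin N) (Fin N) ℝ)
    (hG : ∀ j k, G j k = (inner ℝ (indLp A hA (φ j)) (indLp A hA (φ k)) : ℝ))
    (hGinv : IsUnit G) :
    (IsClosed M ∧ (0 : K) ∈ M ∧ (∀ a b : K, a ∈ M → b ∈ M → a + b ∈ M) ∧
      ∀ (c : ℝ) (a : K), a ∈ M → c • a ∈ M) ∧
    ∀ f : Hac,
      (∃! α : Fin N → ℝ,
        ∀ k, (inner ℝ ((f : Lp ℝ 2 μ)) (indLp A hA (φ k)) : ℝ) = ∑ j, G k j * α j) ∧
      ∀ α : Fin N → ℝ,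
        (∀ k, (inner ℝ ((f : Lp ℝ 2 μ)) (indLp A hA (φ k)) : ℝ) = ∑ j, G k j * α j) →
        ∃ hg : indLp A hA ((f : Lp ℝ 2 μ) - ∑ j, α j • φ j) ∈ Hac,
          V ⟨indLp A hA ((f : Lp ℝ 2 μ) - ∑ j, α j • φ j), hg⟩ ∈ M ∧
          ∀ w ∈ M,
            (inner ℝ (V f - V ⟨indLp A hA ((f : Lp ℝ 2 μ) - ∑ j, α j • φ j), hg⟩) w : ℝ) = 0 := by
  classical
  have hGsymm : ∀ j k, G j k = G k j := fun j k => by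
    rw [hG j k, hG k j, real_inner_comm]
  have hφG : ∀ j k, (inner ℝ (φ j) (indLp A hA (φ k)) : ℝ) = G j k := fun j k => by
    rw [hG j k, inner_indLp_indLp]
  constructor
  · -- M is a closed subspace
    refine ⟨?_, ?_, ?_, ?_⟩
    · -- closed
      have hS : M = ⇑V '' {h : Hac | (⇑(h : Lp ℝ 2 μ) : X → ℝ) =ᵐ[μ.restrict Aᶜ] 0} := by
        rw [hM]
        ext k
        constructor
        · rintro ⟨f, h1, h2⟩; exact ⟨f, h1, h2⟩
        · rintro ⟨f, h1, h2⟩; exact ⟨f, h1, h2⟩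
      rw [hS]
      have hclosed : IsClosed (Hac : Set (Lp ℝ 2 μ)) := by
        have : (Hac : Set (Lp ℝ 2 μ)) = ⋂ j, {f | (inner ℝ f (φ j) : ℝ) = 0} := by
          ext f
          simp only [SetLike.mem_coe, hHac f, Set.mem_iInter, Set.mem_setOf_eq]
        rw [this]
        exact isClosed_iInter fun j =>
          isClosed_eq (Continuous.inner continuous_id continuous_const) continuous_const
      haveI : CompleteSpace Hac := hclosed.completeSpace_coe
      have hS2 : IsClosed {h : Hac | (⇑(h : Lp ℝ 2 μ) : X → ℝ) =ᵐ[μ.restrict Aᶜ] 0} := by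
        have heq : {h : Hac | (⇑(h : Lp ℝ 2 μ) : X → ℝ) =ᵐ[μ.restrict Aᶜ] 0}
            = (fun h : Hac => indLp Aᶜ hA.compl (h : Lp ℝ 2 μ)) ⁻¹' {0} := by
          ext h
          simp only [Set.mem_setOf_eq, Set.mem_preimage, Set.mem_singleton_iff,
            indLp_eq_zero_iff hA.compl]
        rw [heq]
        have hcont : Continuous fun h : Hac => indLp Aᶜ hA.compl (h : Lp ℝ 2 μ) := by
          have : LipschitzWith 1 fun f : Lp ℝ 2 μ => indLp Aᶜ hA.compl f := by
            apply LipschitzWith.of_dist_le_mul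
            intro f g
            rw [dist_eq_norm, dist_eq_norm, NNReal.coe_one, one_mul]
            calc ‖indLp Aᶜ hA.compl f - indLp Aᶜ hA.compl g‖
                = ‖indLp Aᶜ hA.compl (f - g)‖ := by
                  rw [← indLpL_apply hA.compl, ← indLpL_apply hA.compl,
                    ← indLpL_apply hA.compl, map_sub]
              _ ≤ ‖f - g‖ := indLp_norm_le hA.compl (f - g)
          exact this.continuous.comp continuous_subtype_val
        exact IsClosed.preimage hcont isClosed_singleton
      exact ((V.isometry.isUniformInducing.isComplete_iff).2
        (hS2.isComplete)).isClosed
    · rw [hM]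
      refine ⟨0, ?_, map_zero V⟩
      have : ⇑((0 : Hac) : Lp ℝ 2 μ) =ᵐ[μ] 0 := Lp.coeFn_zero ℝ 2 μ
      exact this.filter_mono (ae_mono Measure.restrict_le_self)
    · rw [hM]
      rintro a b ⟨f, hf, rfl⟩ ⟨g, hg, rfl⟩
      refine ⟨f + g, ?_, map_add V f g⟩
      have hadd : ⇑((f : Lp ℝ 2 μ) + (g : Lp ℝ 2 μ)) =ᵐ[μ] ⇑(f : Lp ℝ 2 μ) + ⇑(g : Lp ℝ 2 μ) :=
        Lp.coeFn_add _ _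
      filter_upwards [hadd.filter_mono (ae_mono Measure.restrict_le_self), hf, hg]
        with x h1 h2 h3
      show (⇑((f : Lp ℝ 2 μ) + (g : Lp ℝ 2 μ)) : X → ℝ) x = 0
      rw [h1, Pi.add_apply, h2, h3]
      simp
    · rw [hM]
      rintro c a ⟨f, hf, rfl⟩
      refine ⟨c • f, ?_, map_smul V c f⟩
      have hsmul : ⇑(c • (f : Lp ℝ 2 μ)) =ᵐ[μ] c • ⇑(f : Lp ℝ 2 μ) :=
        Lp.coeFn_smul _ _
      filter_upwards [hsmul.filter_mono (ae_mono Measure.restrict_le_self), hf]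
        with x h1 h2
      show (⇑(c • (f : Lp ℝ 2 μ)) : X → ℝ) x = 0
      rw [h1, Pi.smul_apply, h2]
      simp
  · intro f
    have hdet : IsUnit G.det := (Matrix.isUnit_iff_isUnit_det G).1 hGinv
    have hmv : ∀ α : Fin N → ℝ, ∀ k, (G.mulVec α) k = ∑ j, G k j * α j := by
      intro α k
      simp [Matrix.mulVec, dotProduct]
    constructor
    · -- existence and uniqueness of α
      set F : Fin N → ℝ := fun k => (inner ℝ ((f : Lp ℝ 2 μ)) (indLp A hA (φ k)) : ℝ) with hF
      refine ⟨G⁻¹.mulVec F, ?_, ?_⟩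
      · intro k
        rw [← hmv, Matrix.mulVec_mulVec, Matrix.mul_nonsing_inv G hdet, Matrix.one_mulVec]
      · intro β hβ
        have h1 : G.mulVec β = F := by
          funext k
          rw [hmv, ← hβ k]
        have h2 : G.mulVec (G⁻¹.mulVec F) = F := by
          rw [Matrix.mulVec_mulVec, Matrix.mul_nonsing_inv G hdet, Matrix.one_mulVec]
        exact Matrix.mulVec_injective_iff_isUnit.2 hGinv (h1.trans h2.symm)
    · intro α hα
      set g : Lp ℝ 2 μ := indLp A hA ((f : Lp ℝ 2 μ) - ∑ j, α j • φ j) with hgdef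
      have hsum : ∀ k, (inner ℝ ((∑ j, α j • φ j : Lp ℝ 2 μ)) (indLp A hA (φ k)) : ℝ)
          = ∑ j, G k j * α j := by
        intro k
        rw [sum_inner]
        refine Finset.sum_congr rfl fun j _ => ?_
        rw [real_inner_smul_left, hφG j k, hGsymm j k, mul_comm]
      have hg : g ∈ Hac := by
        rw [hHac]
        intro k
        have h1 : (inner ℝ g (φ k) : ℝ)
            = (inner ℝ ((f : Lp ℝ 2 μ) - ∑ j, α j • φ j) (indLp A hA (φ k)) : ℝ) :=
          inner_indLp_left hA _ _
        rw [h1, inner_sub_left, hα k, hsum k, sub_self]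
      refine ⟨hg, ?_, ?_⟩
      · rw [hM]
        exact ⟨⟨g, hg⟩, indLp_ae_zero_compl hA _, rfl⟩
      · intro w hw
        rw [hM] at hw
        obtain ⟨h, hh0, rfl⟩ := hw
        rw [← map_sub, V.inner_map_map, Submodule.coe_inner]
        have hcoe : ((f - ⟨g, hg⟩ : Hac) : Lp ℝ 2 μ) = (f : Lp ℝ 2 μ) - g := rfl
        rw [hcoe]
        have hind : indLp A hA ((h : Lp ℝ 2 μ)) = (h : Lp ℝ 2 μ) :=
          indLp_of_ae_zero hA hh0
        rw [← hind, ← inner_indLp_left hA]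
        have hkey : indLp A hA ((f : Lp ℝ 2 μ) - g) = ∑ j, α j • indLp A hA (φ j) := by
          have e1 : indLp A hA ((f : Lp ℝ 2 μ) - g)
              = indLp A hA (f : Lp ℝ 2 μ) - indLp A hA g := by
            rw [← indLpL_apply hA, ← indLpL_apply hA, ← indLpL_apply hA, map_sub]
          have e2 : indLp A hA g = indLp A hA ((f : Lp ℝ 2 μ) - ∑ j, α j • φ j) :=
            indLp_indLp hA _
          have e3 : indLp A hA ((f : Lp ℝ 2 μ) - ∑ j, α j • φ j)
              = indLp A hA (f : Lp ℝ 2 μ) - ∑ j, α j • indLp A hA (φ j) := by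
            rw [← indLpL_apply hA, map_sub, map_sum]
            simp only [indLpL_apply, indLp_smul]
          rw [e1, e2, e3]
          abel
        rw [hkey, sum_inner]
        refine Finset.sum_eq_zero fun j _ => ?_
        rw [real_inner_smul_left, inner_indLp_left hA, hind]
        have : (inner ℝ ((h : Lp ℝ 2 μ)) (φ j) : ℝ) = 0 := (hHac _).1 h.2 j
        rw [real_inner_comm, this, mul_zero]
end
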